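/- arXiv:1911.06580 — 4 statements merged into one kernel-verified Lean document; each statement's English description precedes it below -/
import Mathlib

section
/- Let C be a preadditive monoidal category in which tensoring with a fixed object is additive in the other variable (monoidally preadditive), let X be an object of C, let d be a natural number, let δ : X ⊗ X ⟶ X be a morphism, and let π : ℕ → End(X) be a family of endomorphisms such that: π(i) ∘ π(i) = π(i) for all i (projectors); π(i) ∘ π(j) = 0 for all i ≠ j (orthogonality); π(i) = 0 for all i > 2d; and π(0) + π(1) + … + π(2d) = 𝟙_X (completeness). Then the following conditions are equivalent: (a) for all i, j, k with k ≠ i + j, one has π(k) ∘ δ ∘ (π(i) ⊗ π(j)) = 0; (b) for all i, j, one has π(i+j) ∘ δ ∘ (π(i) ⊗ π(j)) = δ ∘ (π(i) ⊗ π(j)); (c) δ = Σ_{i=0}^{2d} Σ_{j=0}^{2d} π(i+j) ∘ δ ∘ (π(i) ⊗ π(j)). -/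
open CategoryTheory MonoidalCategory

/-- In a monoidally preadditive monoidal category, given an object `X`, a
"multiplication" `δ : X ⊗ X ⟶ X` and a complete family of pairwise orthogonal projectors
`p i` (vanishing for `i > 2d`), the three characterizations of multiplicativity are
equivalent: (a) `p k ∘ δ ∘ (p i ⊗ₘ p j) = 0` for `k ≠ i + j`; (b)
`p (i+j) ∘ δ ∘ (p i ⊗ₘ p j) = δ ∘ (p i ⊗ₘ p j)` for all `i, j`; (c)
`δ = ∑_{i,j ≤ 2d} p (i+j) ∘ δ ∘ (p i ⊗ₘ p j)`. -/
theorem multiplicative_projectors_tfae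
    {C : Type*} [Category C] [Preadditive C] [MonoidalCategory C] [MonoidalPreadditive C]
    (X : C) (d : ℕ) (δ : X ⊗ X ⟶ X) (p : ℕ → (X ⟶ X))
    (h_idem : ∀ i, p i ≫ p i = p i)
    (h_orth : ∀ i j, i ≠ j → p i ≫ p j = 0)
    (h_vanish : ∀ i, 2 * d < i → p i = 0)
    (h_complete : ∑ i ∈ Finset.range (2 * d + 1), p i = 𝟙 X) :
    ((∀ i j k, k ≠ i + j → (p i ⊗ₘ p j) ≫ δ ≫ p k = 0) ↔
      (∀ i j, (p i ⊗ₘ p j) ≫ δ ≫ p (i + j) = (p i ⊗ₘ p j) ≫ δ)) ∧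
    ((∀ i j, (p i ⊗ₘ p j) ≫ δ ≫ p (i + j) = (p i ⊗ₘ p j) ≫ δ) ↔
      δ = ∑ i ∈ Finset.range (2 * d + 1), ∑ j ∈ Finset.range (2 * d + 1),
        (p i ⊗ₘ p j) ≫ δ ≫ p (i + j)) := by
  have hab : (∀ i j k, k ≠ i + j → (p i ⊗ₘ p j) ≫ δ ≫ p k = 0) ↔
      (∀ i j, (p i ⊗ₘ p j) ≫ δ ≫ p (i + j) = (p i ⊗ₘ p j) ≫ δ) := by
    constructor
    · intro ha i j
      have : (p i ⊗ₘ p j) ≫ δ = ∑ k ∈ Finset.range (2 * d + 1), (p i ⊗ₘ p j) ≫ δ ≫ p k := by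
        rw [← Preadditive.comp_sum]
        conv_lhs => rw [← Category.comp_id δ, ← h_complete]
        rw [Preadditive.comp_sum]
      rw [this]
      by_cases hk : i + j ∈ Finset.range (2 * d + 1)
      · rw [Finset.sum_eq_single (i + j)]
        · intro b _ hb; exact ha i j b hb
        · intro h; exact absurd hk h
      · rw [Finset.sum_eq_zero, h_vanish (i + j)
          (by rw [Finset.mem_range] at hk; omega)]
        · simp
        · intro b hb
          exact ha i j b (fun h => hk (h ▸ hb))
    · intro hb i j k hk
      calc (p i ⊗ₘ p j) ≫ δ ≫ p k = ((p i ⊗ₘ p j) ≫ δ) ≫ p k := by rw [Category.assoc]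
        _ = ((p i ⊗ₘ p j) ≫ δ ≫ p (i + j)) ≫ p k := by rw [hb]
        _ = (p i ⊗ₘ p j) ≫ δ ≫ (p (i + j) ≫ p k) := by simp [Category.assoc]
        _ = 0 := by rw [h_orth _ _ (Ne.symm hk)]; simp
  refine ⟨hab, ?_, ?_⟩
  · intro hb
    conv_lhs => rw [← Category.id_comp δ, ← id_tensorHom_id, ← h_complete]
    rw [sum_tensor, Preadditive.sum_comp]
    refine Finset.sum_congr rfl fun i _ => ?_
    rw [tensor_sum, Preadditive.sum_comp]
    exact Finset.sum_congr rfl fun j _ => (hb i j).symm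
  · intro hc i j
    by_cases hi : i ∈ Finset.range (2 * d + 1)
    · by_cases hj : j ∈ Finset.range (2 * d + 1)
      · have key : (p i ⊗ₘ p j) ≫ δ = (p i ⊗ₘ p j) ≫ δ ≫ p (i + j) := by
          conv_lhs => rw [hc]
          rw [Preadditive.comp_sum]
          rw [Finset.sum_eq_single i]
          · rw [Preadditive.comp_sum, Finset.sum_eq_single j]
            · rw [← Category.assoc, tensorHom_comp_tensorHom, h_idem, h_idem]
            · intro b _ hb
              rw [← Category.assoc, tensorHom_comp_tensorHom, h_orth _ _ (Ne.symm hb),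
                MonoidalPreadditive.tensor_zero]; simp
            · intro h; exact absurd hj h
          · intro b _ hb
            rw [Preadditive.comp_sum, Finset.sum_eq_zero]
            intro c _
            rw [← Category.assoc, tensorHom_comp_tensorHom, h_orth _ _ (Ne.symm hb),
              MonoidalPreadditive.zero_tensor]; simp
          · intro h; exact absurd hi h
        exact key.symm
      · have : p j = 0 := h_vanish j (Nat.lt_of_not_le
          (fun h => hj (Finset.mem_range.mpr (Nat.lt_succ_of_le h))))
        simp [this, MonoidalPreadditive.tensor_zero]
    · have : p i = 0 := h_vanish i (Nat.lt_of_not_le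
        (fun h => hi (Finset.mem_range.mpr (Nat.lt_succ_of_le h))))
      simp [this, MonoidalPreadditive.zero_tensor]
end

section
/- Let C be a symmetric monoidal preadditive category whose tensor product is additive in each variable (monoidally preadditive), let X and Y be objects of C equipped with morphisms δ_X : X ⊗ X ⟶ X and δ_Y : Y ⊗ Y ⟶ Y, natural numbers d_X and d_Y, and families π_X : ℕ → End(X) and π_Y : ℕ → End(Y) of pairwise orthogonal idempotents with π_X(i) = 0 for i > 2d_X, π_Y(i) = 0 for i > 2d_Y, Σ_{i=0}^{2d_X} π_X(i) = 𝟙_X, Σ_{i=0}^{2d_Y} π_Y(i) = 𝟙_Y, and suppose both systems are multiplicative, i.e. π_X(k) ∘ δ_X ∘ (π_X(i) ⊗ π_X(j)) = 0 whenever k ≠ i + j, and similarly for Y. Define δ_{X⊗Y} : (X ⊗ Y) ⊗ (X ⊗ Y) ⟶ X ⊗ Y as the composition of the middle-factor braiding (X ⊗ Y) ⊗ (X ⊗ Y) ≅ (X ⊗ X) ⊗ (Y ⊗ Y) with δ_X ⊗ δ_Y, and define π_{X⊗Y}(k) := Σ_{i+j=k} π_X(i) ⊗ π_Y(j). Then the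 family π_{X⊗Y} consists of pairwise orthogonal idempotents with π_{X⊗Y}(k) = 0 for k > 2(d_X + d_Y) and Σ_{k=0}^{2(d_X+d_Y)} π_{X⊗Y}(k) = 𝟙_{X⊗Y}, and it is multiplicative for δ_{X⊗Y}: π_{X⊗Y}(k) ∘ δ_{X⊗Y} ∘ (π_{X⊗Y}(i) ⊗ π_{X⊗Y}(j)) = 0 whenever k ≠ i + j. -/
open CategoryTheory MonoidalCategory

/-- In a symmetric monoidal preadditive category, if `(X, δX, pX)` and
`(Y, δY, pY)` are objects with "small diagonal" multiplications and multiplicative complete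
families of pairwise orthogonal projectors (supported in degrees `≤ 2dX`, resp. `≤ 2dY`),
then the product family `pXY k = ∑_{i+j=k} pX i ⊗ pY j` on `X ⊗ Y`, together with the
multiplication `δXY = tensorμ ≫ (δX ⊗ δY)` obtained from the middle-factor braiding, is
again a complete family of pairwise orthogonal projectors supported in degrees
`≤ 2(dX + dY)`, and it is multiplicative. -/
theorem product_of_multiplicative_projectors
    {C : Type*} [Category C] [Preadditive C] [MonoidalCategory C] [MonoidalPreadditive C]
    [SymmetricCategory C]
    (X Y : C) (δX : X ⊗ X ⟶ X) (δY : Y ⊗ Y ⟶ Y) (dX dY : ℕ)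
    (pX : ℕ → (X ⟶ X)) (pY : ℕ → (Y ⟶ Y))
    (hX_idem : ∀ i, pX i ≫ pX i = pX i)
    (hY_idem : ∀ i, pY i ≫ pY i = pY i)
    (hX_orth : ∀ i j, i ≠ j → pX i ≫ pX j = 0)
    (hY_orth : ∀ i j, i ≠ j → pY i ≫ pY j = 0)
    (hX_vanish : ∀ i, 2 * dX < i → pX i = 0)
    (hY_vanish : ∀ i, 2 * dY < i → pY i = 0)
    (hX_complete : ∑ i ∈ Finset.range (2 * dX + 1), pX i = 𝟙 X)
    (hY_complete : ∑ i ∈ Finset.range (2 * dY + 1), pY i = 𝟙 Y)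
    (hX_mult : ∀ i j k, k ≠ i + j → (pX i ⊗ₘ pX j) ≫ δX ≫ pX k = 0)
    (hY_mult : ∀ i j k, k ≠ i + j → (pY i ⊗ₘ pY j) ≫ δY ≫ pY k = 0)
    (δXY : (X ⊗ Y) ⊗ (X ⊗ Y) ⟶ X ⊗ Y)
    (hδXY : δXY = tensorμ X Y X Y ≫ (δX ⊗ₘ δY))
    (pXY : ℕ → (X ⊗ Y ⟶ X ⊗ Y))
    (hpXY : ∀ k, pXY k = ∑ ij ∈ Finset.HasAntidiagonal.antidiagonal k, pX ij.1 ⊗ₘ pY ij.2) :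
    (∀ k, pXY k ≫ pXY k = pXY k) ∧
    (∀ k l, k ≠ l → pXY k ≫ pXY l = 0) ∧
    (∀ k, 2 * (dX + dY) < k → pXY k = 0) ∧
    (∑ k ∈ Finset.range (2 * (dX + dY) + 1), pXY k = 𝟙 (X ⊗ Y)) ∧
    (∀ i j k, k ≠ i + j → (pXY i ⊗ₘ pXY j) ≫ δXY ≫ pXY k = 0) := by
  have key : ∀ p q : ℕ × ℕ, p.1 ≠ q.1 ∨ p.2 ≠ q.2 →
      (pX p.1 ⊗ₘ pY p.2) ≫ (pX q.1 ⊗ₘ pY q.2) = 0 := by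
    rintro p q (h | h) <;> rw [tensorHom_comp_tensorHom]
    · rw [hX_orth _ _ h, MonoidalPreadditive.zero_tensor]
    · rw [hY_orth _ _ h, MonoidalPreadditive.tensor_zero]
  have fvan : ∀ p : ℕ × ℕ, 2 * dX < p.1 ∨ 2 * dY < p.2 → pX p.1 ⊗ₘ pY p.2 = 0 := by
    rintro p (h | h)
    · rw [hX_vanish _ h, MonoidalPreadditive.zero_tensor]
    · rw [hY_vanish _ h, MonoidalPreadditive.tensor_zero]
  refine ⟨?_, ?_, ?_, ?_, ?_⟩
  · -- idempotence
    intro k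
    rw [hpXY, Preadditive.sum_comp]
    refine Finset.sum_congr rfl fun p hp => ?_
    rw [Preadditive.comp_sum, Finset.sum_eq_single_of_mem p hp]
    · rw [tensorHom_comp_tensorHom, hX_idem, hY_idem]
    · intro q hq hqp
      refine key p q ?_
      simp only [Finset.HasAntidiagonal.mem_antidiagonal] at hp hq
      by_contra h
      push_neg at h
      exact hqp (Prod.ext h.1.symm h.2.symm)
  · -- orthogonality
    intro k l hkl
    rw [hpXY, hpXY, Preadditive.sum_comp]
    refine Finset.sum_eq_zero fun p hp => ?_
    rw [Preadditive.comp_sum]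
    refine Finset.sum_eq_zero fun q hq => ?_
    refine key p q ?_
    simp only [Finset.HasAntidiagonal.mem_antidiagonal] at hp hq
    by_contra h
    push_neg at h
    exact hkl (by rw [← hp, ← hq, h.1, h.2])
  · -- vanishing
    intro k hk
    rw [hpXY]
    refine Finset.sum_eq_zero fun p hp => ?_
    simp only [Finset.HasAntidiagonal.mem_antidiagonal] at hp
    exact fvan p (by omega)
  · -- completeness
    set N := 2 * (dX + dY) with hN
    have hdisj : (↑(Finset.range (N + 1)) : Set ℕ).PairwiseDisjoint
        Finset.HasAntidiagonal.antidiagonal := by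
      intro a _ b _ hab
      refine Finset.disjoint_left.2 fun p hpa hpb => ?_
      simp only [Finset.HasAntidiagonal.mem_antidiagonal] at hpa hpb
      exact hab (by omega)
    have h1 : ∑ k ∈ Finset.range (N + 1), pXY k =
        ∑ p ∈ (Finset.range (N + 1)).biUnion Finset.HasAntidiagonal.antidiagonal, pX p.1 ⊗ₘ pY p.2 := by
      rw [Finset.sum_biUnion hdisj]
      exact Finset.sum_congr rfl fun k _ => hpXY k
    have h2 : ∑ p ∈ (Finset.range (N + 1)).biUnion Finset.HasAntidiagonal.antidiagonal, pX p.1 ⊗ₘ pY p.2 =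
        ∑ p ∈ Finset.range (N + 1) ×ˢ Finset.range (N + 1), pX p.1 ⊗ₘ pY p.2 := by
      refine Finset.sum_subset ?_ ?_
      · intro p hp
        simp only [Finset.mem_biUnion, Finset.HasAntidiagonal.mem_antidiagonal, Finset.mem_range] at hp
        obtain ⟨k, hk, hpk⟩ := hp
        simp only [Finset.mem_product, Finset.mem_range]
        omega
      · intro p hp hnp
        simp only [Finset.mem_biUnion, Finset.HasAntidiagonal.mem_antidiagonal, Finset.mem_range] at hnp
        push_neg at hnp
        have hgt : N < p.1 + p.2 := by
          by_contra h
          push_neg at h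
          exact absurd rfl (hnp (p.1 + p.2) (by omega))
        exact fvan p (by omega)
    have h3 : ∑ p ∈ Finset.range (N + 1) ×ˢ Finset.range (N + 1), pX p.1 ⊗ₘ pY p.2 =
        ∑ p ∈ Finset.range (2 * dX + 1) ×ˢ Finset.range (2 * dY + 1), pX p.1 ⊗ₘ pY p.2 := by
      symm
      refine Finset.sum_subset ?_ ?_
      · intro p hp
        simp only [Finset.mem_product, Finset.mem_range] at hp ⊢
        omega
      · intro p hp hnp
        simp only [Finset.mem_product, Finset.mem_range] at hnp
        push_neg at hnp
        refine fvan p ?_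
        by_cases h : p.1 < 2 * dX + 1
        · exact Or.inr (by omega)
        · exact Or.inl (by omega)
    rw [h1, h2, h3, Finset.sum_product]
    calc (∑ a ∈ Finset.range (2 * dX + 1), ∑ b ∈ Finset.range (2 * dY + 1), pX a ⊗ₘ pY b)
        = (∑ a ∈ Finset.range (2 * dX + 1), pX a) ⊗ₘ
            (∑ b ∈ Finset.range (2 * dY + 1), pY b) := by
          rw [sum_tensor]
          exact Finset.sum_congr rfl fun a _ => (tensor_sum _ _ _).symm
      _ = 𝟙 (X ⊗ Y) := by rw [hX_complete, hY_complete, id_tensorHom_id]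
  · -- multiplicativity
    intro i j k hk
    have mult_term : ∀ a b c d e f : ℕ, e ≠ a + c ∨ f ≠ b + d →
        ((pX a ⊗ₘ pY b) ⊗ₘ (pX c ⊗ₘ pY d)) ≫ tensorμ X Y X Y ≫ (δX ⊗ₘ δY) ≫ (pX e ⊗ₘ pY f)
          = 0 := by
      intro a b c d e f h
      rw [tensorμ_natural_assoc]
      have heq : ((pX a ⊗ₘ pX c) ⊗ₘ pY b ⊗ₘ pY d) ≫ (δX ⊗ₘ δY) ≫ (pX e ⊗ₘ pY f) =
          ((pX a ⊗ₘ pX c) ≫ δX ≫ pX e) ⊗ₘ ((pY b ⊗ₘ pY d) ≫ δY ≫ pY f) := by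
        rw [tensorHom_comp_tensorHom, tensorHom_comp_tensorHom]
      rw [heq]
      rcases h with h | h
      · rw [hX_mult _ _ _ h, MonoidalPreadditive.zero_tensor, Limits.comp_zero]
      · rw [hY_mult _ _ _ h, MonoidalPreadditive.tensor_zero, Limits.comp_zero]
    rw [hδXY, hpXY i, hpXY j, hpXY k]
    simp only [sum_tensor, tensor_sum, Preadditive.sum_comp, Preadditive.comp_sum,
      Category.assoc]
    refine Finset.sum_eq_zero fun p hp => ?_
    refine Finset.sum_eq_zero fun q hq => ?_
    refine Finset.sum_eq_zero fun r hr => ?_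
    simp only [Finset.HasAntidiagonal.mem_antidiagonal] at hp hq hr
    have h : p.1 ≠ r.1 + q.1 ∨ p.2 ≠ r.2 + q.2 := by
      by_contra h
      push_neg at h
      exact hk (by omega)
    exact mult_term r.1 r.2 q.1 q.2 p.1 p.2 h
end

section
/- Let n ≥ 5 be a natural number. In the polynomial ring ℚ[x, y], define for each natural number k the polynomial R_k(x, y) := Σ_{i=0}^{⌊k/2⌋} (−1)^i · binom(k−i, i) · x^{k−2i} · y^i (so R_k = x^k − binom(k−1,1)·x^{k−2}y + binom(k−2,2)·x^{k−4}y² − ⋯). Suppose P ∈ ℚ[x, y] is a nonzero polynomial and m₁, m₂, m₃ ∈ ℚ are scalars such that P(x,y) · (2x²y + y²) = (m₁x² + m₂y) · R_{n+1}(x, y) + m₃ · x · R_{n+2}(x, y). Then P is not divisible by y. -/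
open MvPolynomial

/-- The polynomial `R_k(x, y) = ∑_{i=0}^{⌊k/2⌋} (−1)^i C(k−i, i) x^{k−2i} y^i`
in `ℚ[x, y]`, with `x = X 0` of degree 1 and `y = X 1` of degree 2. -/
noncomputable def grassRelation (k : ℕ) : MvPolynomial (Fin 2) ℚ :=
  ∑ i ∈ Finset.range (k / 2 + 1),
    C ((-1 : ℚ) ^ i * ((k - i).choose i : ℚ)) * X 0 ^ (k - 2 * i) * X 1 ^ i

/-- Jacobsthal-like numbers: `u k = ∑ C(k-i, i) 2^i`. -/
def jacU (k : ℕ) : ℕ := ∑ i ∈ Finset.range (k + 1), (k - i).choose i * 2 ^ i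

lemma jacU_rec (k : ℕ) : jacU (k + 2) = jacU (k + 1) + 2 * jacU k := by
  have step : ∀ i ∈ Finset.range (k + 2),
      (k + 1 - i).choose (i + 1) * 2 ^ (i + 1)
        = (k - i).choose i * 2 ^ (i + 1) + (k - i).choose (i + 1) * 2 ^ (i + 1) := by
    intro i hi
    rcases le_or_gt i k with h | h
    · rw [show k + 1 - i = (k - i) + 1 by omega, Nat.choose_succ_succ, add_mul, add_comm]
    · have hi1 : i = k + 1 := by simp at hi; omega
      subst hi1
      simp [Nat.choose_eq_zero_of_lt]
  have h1 : jacU (k + 2)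
      = (∑ i ∈ Finset.range (k + 2), (k + 1 - i).choose (i + 1) * 2 ^ (i + 1)) + 1 := by
    rw [jacU, Finset.sum_range_succ' (fun i => (k + 2 - i).choose i * 2 ^ i) (k + 2)]
    simp only [Nat.choose_zero_right, pow_zero, mul_one]
    congr 1
    apply Finset.sum_congr rfl
    intro i _
    rw [show k + 2 - (i + 1) = k + 1 - i by omega]
  rw [h1, Finset.sum_congr rfl step, Finset.sum_add_distrib]
  have hA : (∑ i ∈ Finset.range (k + 2), (k - i).choose i * 2 ^ (i + 1)) = 2 * jacU k := by
    rw [Finset.sum_range_succ]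
    rw [show k - (k + 1) = 0 by omega, Nat.choose_eq_zero_of_lt (by omega)]
    rw [jacU, Finset.mul_sum]
    simp [pow_succ, mul_comm, mul_assoc, mul_left_comm]
  have hB : (∑ i ∈ Finset.range (k + 2), (k - i).choose (i + 1) * 2 ^ (i + 1)) + 1
      = jacU (k + 1) := by
    rw [jacU, Finset.sum_range_succ' (fun i => (k + 1 - i).choose i * 2 ^ i) (k + 1)]
    simp only [Nat.choose_zero_right, pow_zero, mul_one]
    congr 1
    rw [Finset.sum_range_succ]
    rw [show k - (k + 1) = 0 by omega, Nat.choose_eq_zero_of_lt (by omega)]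
    simp only [zero_mul, add_zero]
    apply Finset.sum_congr rfl
    intro i _
    rw [show k + 1 - (i + 1) = k - i by omega]
  omega

lemma jacU_closed (k : ℕ) : (3 : ℤ) * jacU k = 2 ^ (k + 1) + (-1) ^ k := by
  induction k using Nat.twoStepInduction with
  | zero => decide
  | one => decide
  | more k ih1 ih2 =>
    rw [jacU_rec]
    push_cast
    push_cast at ih1 ih2
    ring_nf
    ring_nf at ih1 ih2
    nlinarith [ih1, ih2]

noncomputable def psi : MvPolynomial (Fin 2) ℚ →ₐ[ℚ] Polynomial ℚ :=
  aeval ![(1 : Polynomial ℚ), Polynomial.X]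

lemma psi_X0 : psi (X 0) = 1 := by simp [psi]
lemma psi_X1 : psi (X 1) = Polynomial.X := by simp [psi]
lemma psi_C (a : ℚ) : psi (C a) = Polynomial.C a := by
  simp [psi, Polynomial.algebraMap_eq]

lemma psi_grass (k : ℕ) :
    psi (grassRelation k)
      = ∑ i ∈ Finset.range (k / 2 + 1),
          Polynomial.C ((-1 : ℚ) ^ i * ((k - i).choose i : ℚ)) * Polynomial.X ^ i := by
  simp [psi, grassRelation, map_sum, Polynomial.algebraMap_eq]

lemma psi_coeff_zero (k : ℕ) : (psi (grassRelation k)).coeff 0 = 1 := by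
  rw [psi_grass, Polynomial.finset_sum_coeff]
  simp only [Polynomial.coeff_C_mul, Polynomial.coeff_X_pow, mul_ite, mul_one, mul_zero]
  rw [Finset.sum_ite_eq]
  simp

lemma psi_coeff_one (k : ℕ) (hk : 2 ≤ k) :
    (psi (grassRelation k)).coeff 1 = -((k - 1 : ℕ) : ℚ) := by
  rw [psi_grass, Polynomial.finset_sum_coeff]
  simp only [Polynomial.coeff_C_mul, Polynomial.coeff_X_pow, mul_ite, mul_one, mul_zero]
  rw [Finset.sum_ite_eq]
  rw [if_pos (by simp; omega)]
  simp [Nat.choose_one_right]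

lemma psi_eval_neg_two (k : ℕ) :
    (psi (grassRelation k)).eval (-2) = (jacU k : ℚ) := by
  rw [psi_grass, Polynomial.eval_finset_sum]
  simp only [Polynomial.eval_mul, Polynomial.eval_C, Polynomial.eval_pow, Polynomial.eval_X]
  have hterm : ∀ i : ℕ, (-1 : ℚ) ^ i * ((k - i).choose i : ℚ) * (-2) ^ i
      = ((k - i).choose i : ℚ) * 2 ^ i := by
    intro i
    rw [show (-2 : ℚ) = -1 * 2 by norm_num, mul_pow]
    have : (-1 : ℚ) ^ i * (-1 : ℚ) ^ i = 1 := by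
      rw [← mul_pow]; norm_num
    calc (-1 : ℚ) ^ i * ((k - i).choose i : ℚ) * ((-1) ^ i * 2 ^ i)
        = ((-1 : ℚ) ^ i * (-1) ^ i) * (((k - i).choose i : ℚ) * 2 ^ i) := by ring
      _ = ((k - i).choose i : ℚ) * 2 ^ i := by rw [this, one_mul]
  rw [Finset.sum_congr rfl fun i _ => hterm i, jacU]
  rw [Finset.sum_subset (Finset.range_subset_range.2 (by omega : k / 2 + 1 ≤ k + 1))]
  · push_cast; ring
  · intro i hi hni
    simp only [Finset.mem_range] at hi hni
    rw [Nat.choose_eq_zero_of_lt (by omega : k - i < i)]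
    simp

/-- Let `n ≥ 5`. If a nonzero polynomial `P ∈ ℚ[x, y]` and scalars
`m₁, m₂, m₃ ∈ ℚ` satisfy
`P · (2x²y + y²) = (m₁x² + m₂y) · R_{n+1} + m₃ · x · R_{n+2}`,
then `P` is not divisible by `y`. -/
theorem not_y_dvd_of_grass_relation
    (n : ℕ) (hn : 5 ≤ n)
    (P : MvPolynomial (Fin 2) ℚ) (hP : P ≠ 0)
    (m₁ m₂ m₃ : ℚ)
    (h : P * (2 * X 0 ^ 2 * X 1 + X 1 ^ 2) =
      (C m₁ * X 0 ^ 2 + C m₂ * X 1) * grassRelation (n + 1) +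
        C m₃ * X 0 * grassRelation (n + 2)) :
    ¬ (X 1 ∣ P) := by

  intro hdvd
  obtain ⟨Q, hQ⟩ := hdvd
  rw [hQ] at h
  have H := congrArg psi h
  simp only [map_mul, map_add, map_pow, map_ofNat, psi_X0, psi_X1, psi_C, one_pow, mul_one,
    one_mul] at H
  have hG : Polynomial.C m₁ * psi (grassRelation (n + 1))
      + Polynomial.C m₂ * (psi (grassRelation (n + 1)) * Polynomial.X ^ 1)
      + Polynomial.C m₃ * psi (grassRelation (n + 2))
      = (psi Q * (Polynomial.X + 2)) * Polynomial.X ^ 2 := by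
    linear_combination -H
  have e0 : m₁ + m₃ = 0 := by
    have := congrArg (fun p => Polynomial.coeff p 0) hG
    simp only [Polynomial.coeff_add, Polynomial.coeff_C_mul, Polynomial.coeff_mul_X_pow',
      psi_coeff_zero] at this
    simpa using this
  have c1 : (psi (grassRelation (n + 1))).coeff 1 = -(n : ℚ) := by
    rw [psi_coeff_one (n + 1) (by omega)]
    norm_num
  have c2 : (psi (grassRelation (n + 2))).coeff 1 = -((n : ℚ) + 1) := by
    rw [psi_coeff_one (n + 2) (by omega)]
    push_cast [show n + 2 - 1 = n + 1 by omega]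
    ring
  have e1 : -(n : ℚ) * m₁ + m₂ - ((n : ℚ) + 1) * m₃ = 0 := by
    have := congrArg (fun p => Polynomial.coeff p 1) hG
    simp only [Polynomial.coeff_add, Polynomial.coeff_C_mul, Polynomial.coeff_mul_X_pow',
      c1, c2] at this
    norm_num [psi_coeff_zero] at this
    linarith [this]
  set A : ℚ := (jacU (n + 1) : ℚ) with hA
  set B : ℚ := (jacU (n + 2) : ℚ) with hB
  have e2 : m₁ * A + m₂ * (A * (-2)) + m₃ * B = 0 := by
    have := congrArg (fun p => Polynomial.eval (-2 : ℚ) p) hG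
    simp only [Polynomial.eval_add, Polynomial.eval_mul, Polynomial.eval_C,
      Polynomial.eval_pow, Polynomial.eval_X, psi_eval_neg_two] at this
    rw [hA, hB]
    norm_num at this
    linarith [this]
  have h3A : (3 : ℚ) * A = 2 ^ (n + 2) + (-1) ^ (n + 1) := by
    have := jacU_closed (n + 1)
    rw [hA]
    exact_mod_cast this
  have h3B : (3 : ℚ) * B = 2 ^ (n + 3) + (-1) ^ (n + 2) := by
    have := jacU_closed (n + 2)
    rw [hB]
    exact_mod_cast this
  have h2p : (2 : ℚ) ^ (n + 3) = 2 * 2 ^ (n + 2) := by rw [pow_succ]; ring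
  have heps : (-1 : ℚ) ^ (n + 2) = -(-1 : ℚ) ^ (n + 1) := by rw [pow_succ]; ring
  have hm3 : m₂ + m₁ = 0 := by linear_combination e1 + ((n : ℚ) + 1) * e0
  have hz : m₁ * ((2 : ℚ) ^ (n + 2) + 4 * (-1) ^ (n + 1)) = 0 := by
    linear_combination 3 * e2 + 6 * A * hm3 - 3 * B * e0 - 3 * m₁ * h3A + m₁ * h3B
      + m₁ * h2p + m₁ * heps
  have key : (2 : ℚ) ^ (n + 2) + 4 * (-1) ^ (n + 1) ≠ 0 := by
    have hpow : (2 : ℚ) ^ 7 ≤ 2 ^ (n + 2) := by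
      apply pow_le_pow_right₀ (by norm_num) (by omega)
    rcases Nat.even_or_odd (n + 1) with he | ho
    · rw [he.neg_one_pow]
      norm_num at hpow ⊢
      nlinarith [hpow]
    · rw [ho.neg_one_pow]
      norm_num at hpow ⊢
      intro hcon
      nlinarith [hpow, hcon]
  have hm1 : m₁ = 0 := by
    rcases mul_eq_zero.1 hz with h' | h'
    · exact h'
    · exact absurd h' key
  have hm2' : m₂ = 0 := by linarith [hm3]
  have hm3' : m₃ = 0 := by linarith [e0]
  rw [hm1, hm2', hm3'] at h
  simp only [map_zero, zero_mul, add_zero, zero_add, mul_zero] at h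
  have hfac : (2 * X 0 ^ 2 * X 1 + X 1 ^ 2 : MvPolynomial (Fin 2) ℚ) ≠ 0 := by
    intro h0
    have := congrArg (eval ![(1 : ℚ), 1]) h0
    simp at this
    norm_num at this
  rcases mul_eq_zero.1 (hQ ▸ h) with h' | h'
  · exact hP h'
  · exact hfac h'
end

section
/- Let n ≥ 5 be a natural number. In ℚ[x, y], define R_k(x, y) := Σ_{i=0}^{⌊k/2⌋} (−1)^i · binom(k−i, i) · x^{k−2i} · y^i. Suppose P ∈ ℚ[x, y] is divisible by y and m₁, m₂, m₃ ∈ ℚ satisfy the identity P(x,y) · (2x²y + y²) = (m₁x² + m₂y) · R_{n+1}(x, y) + m₃ · x · R_{n+2}(x, y). Then m₃ = −m₁ and m₂ = −m₁; moreover, if in addition P ≠ 0, then m₁ ≠ 0. -/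
open MvPolynomial

/-- The algebra map `ℚ[x,y] → ℚ[t]` sending `x ↦ t`, `y ↦ 0`. -/
noncomputable def phi : MvPolynomial (Fin 2) ℚ →ₐ[ℚ] Polynomial ℚ :=
  aeval ![Polynomial.X, 0]

lemma phi_grass (k : ℕ) : phi (grassRelation k) = Polynomial.X ^ k := by
  unfold grassRelation phi
  rw [map_sum, Finset.sum_eq_single 0]
  · simp
  · intro i hi hne; simp [zero_pow hne]
  · intro h; simp at h

lemma phi_pderiv_grass (k : ℕ) :
    phi (pderiv 1 (grassRelation (k + 2))) =
      Polynomial.C (-((k : ℚ) + 1)) * Polynomial.X ^ k := by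
  unfold grassRelation phi
  rw [map_sum, map_sum, Finset.sum_eq_single 1]
  · simp [pderiv_mul]
  · intro i hi hne
    simp only [pderiv_mul]
    simp [pderiv_mul]
    omega
  · intro h; simp at h

set_option maxRecDepth 4000 in
/-- Let `n ≥ 5`. If `P ∈ ℚ[x, y]` is divisible by `y` and
`m₁, m₂, m₃ ∈ ℚ` satisfy
`P · (2x²y + y²) = (m₁x² + m₂y) · R_{n+1} + m₃ · x · R_{n+2}`,
then `m₃ = −m₁` and `m₂ = −m₁`; moreover if `P ≠ 0`, then `m₁ ≠ 0`. -/
theorem coeff_relations_of_y_dvd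
    (n : ℕ) (hn : 5 ≤ n)
    (P : MvPolynomial (Fin 2) ℚ) (hdvd : X 1 ∣ P)
    (m₁ m₂ m₃ : ℚ)
    (h : P * (2 * X 0 ^ 2 * X 1 + X 1 ^ 2) =
      (C m₁ * X 0 ^ 2 + C m₂ * X 1) * grassRelation (n + 1) +
        C m₃ * X 0 * grassRelation (n + 2)) :
    m₃ = -m₁ ∧ m₂ = -m₁ ∧ (P ≠ 0 → m₁ ≠ 0) := by
  obtain ⟨Q, rfl⟩ := hdvd
  obtain ⟨m, rfl⟩ : ∃ m, n = m + 5 := ⟨n - 5, by omega⟩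
  have hφX0 : phi (X 0 : MvPolynomial (Fin 2) ℚ) = Polynomial.X := by simp [phi]
  have hφX1 : phi (X 1 : MvPolynomial (Fin 2) ℚ) = 0 := by simp [phi]
  have hφC : ∀ c : ℚ, phi (C c) = Polynomial.C c := fun c => by simp [phi]
  have hg1 : (m + 5 + 1) = (m + 4) + 2 := by omega
  have hg2 : (m + 5 + 2) = (m + 5) + 2 := by omega
  -- equation A: apply `phi` to `h` and evaluate at `1`
  have hA := congrArg phi h
  simp only [map_add, map_mul, map_pow, map_ofNat, phi_grass, hφX0, hφX1, hφC] at hA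
  have e1 := congrArg (Polynomial.eval 1) hA
  simp at e1
  -- equation B: apply `phi ∘ pderiv 1` to `h` and evaluate at `1`
  have hB := congrArg (fun p => phi (pderiv 1 p)) h
  rw [hg1, hg2] at hB
  simp only [pderiv_mul, map_add, map_mul, map_pow, map_ofNat, phi_grass,
    phi_pderiv_grass, hφX0, hφX1, hφC] at hB
  simp only [pderiv_X, pderiv_C] at hB
  have e2 := congrArg (Polynomial.eval 1) hB
  simp at e2
  have h3 : m₃ = -m₁ := by linarith
  have h2 : m₂ = -m₁ := by linear_combination -e2 - ((m:ℚ)+6) * e1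
  refine ⟨h3, h2, fun hP hm1 => hP ?_⟩
  rw [hm1] at h3 h2
  rw [neg_zero] at h3 h2
  rw [hm1, h2, h3] at h
  simp only [map_zero, zero_mul, mul_zero, add_zero, zero_add] at h
  rcases mul_eq_zero.mp h with h' | h'
  · exact h'
  · exfalso
    have := congrArg (eval fun _ => (1:ℚ)) h'
    norm_num at this
end
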